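/- Let f : ℝ≥0 → ℝ be strictly concave and increasing (the inverse decoding cost function φ⁻¹). In the problem of maximizing ∑_{i=1}^N f(q_i) over q subject to q_i ≥ Ē_i for all i and ∑_{i=1}^j q_i ≤ ∑_{i=1}^j (Ē_i + α H_i) for all j, if the optimal q* satisfies q*_n < q*_m for some m < n, then q*_m = Ē_m. -/

import Mathlib

open Finset

/-- Lemma 4: in the full-power-transmitter / non-battery-receiver problem,
if a later optimal power is smaller than an earlier one, then the earlier slot
consumes exactly its own harvested energy. -/
theorem stmt_4 (N : ℕ) (hN : 0 < N)
    (Ebar H : Fin N → ℝ)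
    (hEbar : ∀ i, 0 ≤ Ebar i) (hH : ∀ i, 0 ≤ H i)
    (α : ℝ) (hα0 : 0 ≤ α) (hα1 : α ≤ 1)
    (f : ℝ → ℝ)
    (hconc : StrictConcaveOn ℝ (Set.Ici 0) f)
    (hmono : StrictMonoOn f (Set.Ici 0))
    (q : Fin N → ℝ)
    (hfeas : (∀ i, Ebar i ≤ q i) ∧
      (∀ j : Fin N, ∑ i ∈ Iic j, q i ≤ ∑ i ∈ Iic j, (Ebar i + α * H i)))
    (hopt : ∀ q' : Fin N → ℝ,
      ((∀ i, Ebar i ≤ q' i) ∧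
        (∀ j : Fin N, ∑ i ∈ Iic j, q' i ≤
          ∑ i ∈ Iic j, (Ebar i + α * H i))) →
      ∑ i, f (q' i) ≤ ∑ i, f (q i))
    (m n : Fin N) (hmn : m < n) (hq : q n < q m) :
    q m = Ebar m := by
  classical
  obtain ⟨hfe, hcum⟩ := hfeas
  by_contra hne
  have hEm : Ebar m < q m := lt_of_le_of_ne (hfe m) (Ne.symm hne)
  set a := q n with ha
  set b := q m with hb
  have hab : a < b := hq
  set ε := min ((b - a) / 2) (b - Ebar m) with hε
  have hε0 : 0 < ε := lt_min (by linarith) (by linarith)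
  have hε1 : ε ≤ (b - a) / 2 := min_le_left _ _
  have hε2 : ε ≤ b - Ebar m := min_le_right _ _
  have hmn' : m ≠ n := ne_of_lt hmn
  set q' : Fin N → ℝ := fun i => if i = n then a + ε else if i = m then b - ε else q i
    with hq'def
  have hq'n : q' n = a + ε := by simp [hq'def]
  have hq'm : q' m = b - ε := by simp [hq'def, hmn']
  have hq'o : ∀ i, i ≠ n → i ≠ m → q' i = q i := by
    intro i h1 h2; simp [hq'def, h1, h2]
  -- pointwise decomposition for sums
  have hpt : ∀ i, q' i = q i + (if i = n then ε else 0) + (if i = m then -ε else 0) := by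
    intro i
    by_cases hi1 : i = n
    · rw [hi1, hq'n, if_pos rfl, if_neg (Ne.symm hmn'), ha]; ring
    · by_cases hi2 : i = m
      · rw [hi2, hq'm, if_neg hmn', if_pos rfl, hb]; ring
      · rw [hq'o i hi1 hi2, if_neg hi1, if_neg hi2]; ring
  -- feasibility of q'
  have hfeas1 : ∀ i, Ebar i ≤ q' i := by
    intro i
    by_cases hi1 : i = n
    · rw [hi1, hq'n]; have := hfe n; linarith
    · by_cases hi2 : i = m
      · rw [hi2, hq'm]; linarith
      · rw [hq'o i hi1 hi2]; exact hfe i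
  have hfeas2 : ∀ j : Fin N, ∑ i ∈ Iic j, q' i ≤ ∑ i ∈ Iic j, (Ebar i + α * H i) := by
    intro j
    have hsum : ∑ i ∈ Iic j, q' i =
        ∑ i ∈ Iic j, q i + (if n ∈ Iic j then ε else 0) + (if m ∈ Iic j then -ε else 0) := by
      rw [Finset.sum_congr rfl fun i _ => hpt i]
      rw [Finset.sum_add_distrib, Finset.sum_add_distrib,
        Finset.sum_ite_eq' (Iic j) n (fun _ => ε),
        Finset.sum_ite_eq' (Iic j) m (fun _ => -ε)]
    have hmono2 : n ∈ Iic j → m ∈ Iic j := by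
      intro hn
      rw [Finset.mem_Iic] at hn ⊢
      exact le_trans (le_of_lt hmn) hn
    have hle : ∑ i ∈ Iic j, q' i ≤ ∑ i ∈ Iic j, q i := by
      rw [hsum]
      by_cases hn : n ∈ Iic j
      · rw [if_pos hn, if_pos (hmono2 hn)]; linarith
      · rw [if_neg hn]
        by_cases hm : m ∈ Iic j
        · rw [if_pos hm]; linarith
        · rw [if_neg hm]; linarith
    exact le_trans hle (hcum j)
  -- concavity gain
  have ha0 : (0:ℝ) ≤ a := le_trans (hEbar n) (hfe n)
  have hb0 : (0:ℝ) ≤ b := le_trans (hEbar m) (hfe m)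
  have hba : 0 < b - a := by linarith
  set t := ε / (b - a) with ht
  have ht0 : 0 < t := div_pos hε0 hba
  have ht1 : t < 1 := by
    rw [div_lt_one hba]; linarith
  have htε : t * (b - a) = ε := div_mul_cancel₀ ε (ne_of_gt hba)
  have h1 : (1 - t) * f a + t * f b < f (a + ε) := by
    have := hconc.2 (Set.mem_Ici.mpr ha0) (Set.mem_Ici.mpr hb0) (ne_of_lt hab)
      (by linarith : (0:ℝ) < 1 - t) ht0 (by ring)
    have heq : (1 - t) • a + t • b = a + ε := by
      simp only [smul_eq_mul]; nlinarith [htε]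
    rw [heq] at this
    simpa using this
  have h2 : t * f a + (1 - t) * f b < f (b - ε) := by
    have := hconc.2 (Set.mem_Ici.mpr ha0) (Set.mem_Ici.mpr hb0) (ne_of_lt hab)
      ht0 (by linarith : (0:ℝ) < 1 - t) (by ring)
    have heq : t • a + (1 - t) • b = b - ε := by
      simp only [smul_eq_mul]; nlinarith [htε]
    rw [heq] at this
    simpa using this
  have hgain : f a + f b < f (a + ε) + f (b - ε) := by nlinarith
  -- objective comparison
  have hobj : ∑ i, f (q' i) =
      ∑ i, f (q i) + (f (a + ε) - f a) + (f (b - ε) - f b) := by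
    have hptf : ∀ i, f (q' i) = f (q i) + (if i = n then f (a + ε) - f a else 0)
        + (if i = m then f (b - ε) - f b else 0) := by
      intro i
      by_cases hi1 : i = n
      · rw [hi1, hq'n, if_pos rfl, if_neg (Ne.symm hmn'), ha]; ring
      · by_cases hi2 : i = m
        · rw [hi2, hq'm, if_neg hmn', if_pos rfl, hb]; ring
        · rw [hq'o i hi1 hi2, if_neg hi1, if_neg hi2]; ring
    rw [Finset.sum_congr rfl fun i _ => hptf i]
    rw [Finset.sum_add_distrib, Finset.sum_add_distrib,
      Finset.sum_ite_eq' Finset.univ n (fun _ => f (a + ε) - f a),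
      Finset.sum_ite_eq' Finset.univ m (fun _ => f (b - ε) - f b)]
    simp
  have := hopt q' ⟨hfeas1, hfeas2⟩
  rw [hobj] at this
  linarith
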